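/- Let ε_B, ε_1, n, A > 0 and P ∈ (0,1), and set N* = sqrt( ε_1²/(4ε_B²) − n·ε_1/(ε_B·log P) ) − ε_1/(2ε_B). Then N* > 0 and N* is the unique global maximizer of η(N) = A·P^(N/n)·N/(ε_B·N + ε_1) over N ∈ (0, ∞): for all N > 0 with N ≠ N*, η(N) < η(N*). -/

import Mathlib

open Real

set_option maxHeartbeats 2000000 in
theorem stmt_4 (εB ε1 n A : ℝ) (hεB : 0 < εB) (hε1 : 0 < ε1) (hn : 0 < n) (hA : 0 < A)
    (P : ℝ) (hP : P ∈ Set.Ioo (0:ℝ) 1)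
    (Nstar : ℝ)
    (hNstar : Nstar = Real.sqrt (ε1 ^ 2 / (4 * εB ^ 2) - n * ε1 / (εB * Real.log P))
        - ε1 / (2 * εB))
    (η : ℝ → ℝ) (hη : ∀ N, η N = A * P ^ (N / n) * N / (εB * N + ε1)) :
    0 < Nstar ∧ ∀ N, 0 < N → N ≠ Nstar → η N < η Nstar := by
  obtain ⟨hP0, hP1⟩ := hP
  have hL : Real.log P < 0 := Real.log_neg hP0 hP1
  set L := Real.log P with hLdef
  have hLne : L ≠ 0 := ne_of_lt hL
  set C : ℝ := -n * ε1 / L with hC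
  have hCpos : 0 < C := by
    rw [hC]
    apply div_pos_of_neg_of_neg
    · nlinarith
    · exact hL
  have hDeq : ε1 ^ 2 / (4 * εB ^ 2) - n * ε1 / (εB * L) = ε1 ^ 2 / (4 * εB ^ 2) + C / εB := by
    rw [hC]; field_simp; ring
  have hDpos : 0 < ε1 ^ 2 / (4 * εB ^ 2) + C / εB := by positivity
  have hsq : (Nstar + ε1 / (2 * εB)) ^ 2 = ε1 ^ 2 / (4 * εB ^ 2) + C / εB := by
    rw [hNstar, hDeq, sub_add_cancel]
    exact Real.sq_sqrt hDpos.le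
  have hNpos : 0 < Nstar := by
    have h2 : ε1 / (2 * εB) = Real.sqrt (ε1 ^ 2 / (4 * εB ^ 2)) := by
      rw [show ε1 ^ 2 / (4 * εB ^ 2) = (ε1 / (2 * εB)) ^ 2 by ring,
        Real.sqrt_sq (by positivity)]
    have h1 : ε1 / (2 * εB) < Real.sqrt (ε1 ^ 2 / (4 * εB ^ 2) + C / εB) := by
      rw [h2]
      apply Real.sqrt_lt_sqrt (by positivity)
      have : 0 < C / εB := by positivity
      linarith
    rw [hNstar, hDeq]; linarith
  have hq : εB * Nstar ^ 2 + ε1 * Nstar = C := by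
    have h := hsq
    field_simp at h
    nlinarith [h, pow_pos hεB 4]
  have hLC : L * C = -n * ε1 := by rw [hC]; field_simp
  -- the log of η
  set f : ℝ → ℝ := fun x => Real.log A + x / n * L + Real.log x - Real.log (εB * x + ε1)
    with hf
  have hden : ∀ x : ℝ, 0 < x → 0 < εB * x + ε1 := fun x hx => by positivity
  have hη_eq : ∀ x : ℝ, 0 < x → η x = Real.exp (f x) := by
    intro x hx
    rw [hη, hf]
    rw [Real.exp_sub, Real.exp_add, Real.exp_add, Real.exp_log hA, Real.exp_log hx,
      Real.exp_log (hden x hx), Real.rpow_def_of_pos hP0, ← hLdef]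
    ring_nf
  have hderiv : ∀ x : ℝ, 0 < x →
      HasDerivAt f (L / n + (1 / x - εB / (εB * x + ε1))) x := by
    intro x hx
    have h1 : HasDerivAt (fun y : ℝ => Real.log A + y / n * L) (L / n) x := by
      have h := (((hasDerivAt_id x).div_const n).mul_const L).const_add (Real.log A)
      exact h.congr_deriv (by ring)
    have h2 : HasDerivAt Real.log x⁻¹ x := Real.hasDerivAt_log hx.ne'
    have h3 : HasDerivAt (fun y : ℝ => εB * y + ε1) εB x := by
      simpa using ((hasDerivAt_id x).const_mul εB).add_const ε1
    have h4 := h3.log (hden x hx).ne'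
    have h5 := (h1.add h2).sub h4
    exact h5.congr_deriv (by ring)
  -- sign of the derivative
  have hval : ∀ x : ℝ, 0 < x →
      L / n + (1 / x - εB / (εB * x + ε1))
        = (L * (x * (εB * x + ε1)) + n * ε1) / (n * (x * (εB * x + ε1))) := by
    intro x hx
    have hd := hden x hx
    field_simp
    ring
  have hsign_pos : ∀ x : ℝ, 0 < x → x < Nstar →
      0 < L / n + (1 / x - εB / (εB * x + ε1)) := by
    intro x hx hxN
    rw [hval x hx]
    apply div_pos
    · have hqlt : x * (εB * x + ε1) < C := by
        nlinarith [hq, mul_pos (mul_pos hεB (sub_pos.2 hxN)) (show (0:ℝ) < Nstar + x by linarith),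
          mul_pos hε1 (sub_pos.2 hxN)]
      nlinarith [hLC, mul_pos (neg_pos.2 hL) (sub_pos.2 hqlt)]
    · have := hden x hx
      positivity
  have hsign_neg : ∀ x : ℝ, Nstar < x →
      L / n + (1 / x - εB / (εB * x + ε1)) < 0 := by
    intro x hxN
    have hx : 0 < x := lt_trans hNpos hxN
    rw [hval x hx]
    apply div_neg_of_neg_of_pos
    · have hqgt : C < x * (εB * x + ε1) := by
        nlinarith [hq, mul_pos (mul_pos hεB (sub_pos.2 hxN)) (show (0:ℝ) < x + Nstar by linarith),
          mul_pos hε1 (sub_pos.2 hxN)]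
      nlinarith [hLC, mul_pos (neg_pos.2 hL) (sub_pos.2 hqgt)]
    · have := hden x hx
      positivity
  -- f has a strict max at Nstar
  have hfmax : ∀ N : ℝ, 0 < N → N ≠ Nstar → f N < f Nstar := by
    intro N hN hne
    rcases lt_or_gt_of_ne hne with hlt | hgt
    · -- N < Nstar : f strictly mono on [N, Nstar]
      have hmono : StrictMonoOn f (Set.Icc N Nstar) := by
        apply strictMonoOn_of_deriv_pos (convex_Icc N Nstar)
        · intro x hx
          exact (hderiv x (lt_of_lt_of_le hN hx.1)).continuousAt.continuousWithinAt
        · intro x hx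
          rw [interior_Icc] at hx
          have hx0 : 0 < x := lt_trans hN hx.1
          rw [(hderiv x hx0).deriv]
          exact hsign_pos x hx0 hx.2
      exact hmono (Set.left_mem_Icc.2 hlt.le) (Set.right_mem_Icc.2 hlt.le) hlt
    · -- Nstar < N : f strictly anti on [Nstar, N]
      have hanti : StrictAntiOn f (Set.Icc Nstar N) := by
        apply strictAntiOn_of_deriv_neg (convex_Icc Nstar N)
        · intro x hx
          exact (hderiv x (lt_of_lt_of_le hNpos hx.1)).continuousAt.continuousWithinAt
        · intro x hx
          rw [interior_Icc] at hx
          have hx0 : 0 < x := lt_trans hNpos hx.1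
          rw [(hderiv x hx0).deriv]
          exact hsign_neg x hx.1
      exact hanti (Set.left_mem_Icc.2 hgt.le) (Set.right_mem_Icc.2 hgt.le) hgt
  refine ⟨hNpos, fun N hN hne => ?_⟩
  rw [hη_eq N hN, hη_eq Nstar hNpos]
  exact Real.exp_lt_exp.2 (hfmax N hN hne)
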